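/- Let f ∈ C¹(ℝ) with f(0) = 0 and f'(0) = λ, let τ > 0, let U be a neighborhood of 0, and let φ : [0,τ] × U → ℝ satisfy φ(0,x₀) = x₀ and ∂φ/∂t(t,x₀) = f(φ(t,x₀)) for all t ∈ [0,τ] and x₀ ∈ U. Then the map x₀ ↦ φ(τ,x₀) is differentiable at 0 with derivative e^{λτ}. -/

import Mathlib

open Set Real

/-- The time-`τ` map of the local flow of `ẋ = f(x)`, with `f(0) = 0` and `f'(0) = λ`,
is differentiable at `0` with derivative `e^{λτ}`. -/
theorem flow_time_tau_map_derivative_at_equilibrium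
    (f : ℝ → ℝ) (lam τ : ℝ)
    (hf : ContDiff ℝ 1 f) (hfeq : f 0 = 0) (hfd : deriv f 0 = lam) (hτ : 0 < τ)
    (U : Set ℝ) (hU : U ∈ nhds (0 : ℝ)) (φ : ℝ → ℝ → ℝ)
    (hφ0 : ∀ x₀ ∈ U, φ 0 x₀ = x₀)
    (hφ : ∀ x₀ ∈ U, ∀ t ∈ Set.Icc (0 : ℝ) τ,
      HasDerivWithinAt (fun s => φ s x₀) (f (φ t x₀)) (Set.Icc (0 : ℝ) τ) t) :
    HasDerivAt (fun x₀ => φ τ x₀) (Real.exp (lam * τ)) 0 := by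
  have hfd' : Differentiable ℝ f := hf.differentiable one_ne_zero
  have hcd : Continuous (deriv f) := hf.continuous_deriv le_rfl
  set L : ℝ := |lam| + 1 with hLdef
  have hL0 : (0:ℝ) < L := by positivity
  -- for any ε > 0 there is δ > 0 with |f y - lam y| ≤ ε |y| for |y| ≤ δ
  have hr : ∀ ε > (0:ℝ), ∃ δ > (0:ℝ), ∀ y : ℝ, |y| ≤ δ → |f y - lam * y| ≤ ε * |y| := by
    intro ε hε
    obtain ⟨δ, hδ, hd⟩ := Metric.continuousAt_iff.mp (hcd.continuousAt (x := 0)) ε hε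
    refine ⟨δ/2, by positivity, fun y hy => ?_⟩
    have key := Convex.norm_image_sub_le_of_norm_hasDerivWithin_le
      (f := fun z => f z - lam * z) (f' := fun z => deriv f z - lam)
      (s := Set.Icc (-(δ/2)) (δ/2)) (C := ε) (x := 0) (y := y)
      (fun z _ => by
        have h1 : HasDerivAt (fun z => f z - lam * z) (deriv f z - lam) z := by
          exact ((hfd' z).hasDerivAt.sub ((hasDerivAt_id z).const_mul lam)).congr_deriv (by ring)
        exact h1.hasDerivWithinAt)
      (fun z hz => by
        have hz' : |z| < δ := lt_of_le_of_lt (abs_le.mpr ⟨hz.1, hz.2⟩) (by linarith)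
        have := hd (x := z) (by simpa [Real.dist_eq] using hz')
        rw [Real.dist_eq, hfd] at this
        simpa [Real.norm_eq_abs] using this.le)
      (convex_Icc _ _)
      (by constructor <;> [linarith; linarith])
      (abs_le.mp hy)
    simpa [hfeq, Real.norm_eq_abs] using key
  obtain ⟨δ₀, hδ₀pos, hδ₀⟩ := hr 1 one_pos
  -- linear growth bound for f near 0
  have hfb : ∀ y : ℝ, |y| ≤ δ₀ → |f y| ≤ L * |y| := by
    intro y hy
    have h1 := hδ₀ y hy
    calc |f y| = |(f y - lam * y) + lam * y| := by ring_nf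
      _ ≤ |f y - lam * y| + |lam * y| := abs_add_le _ _
      _ ≤ 1 * |y| + |lam| * |y| := by rw [abs_mul]; exact add_le_add_left h1 _
      _ = L * |y| := by rw [hLdef]; ring
  -- Gronwall bound with bootstrap
  have key : ∀ x ∈ U, |x| * Real.exp (L * τ) < δ₀ →
      ∀ t ∈ Set.Icc (0:ℝ) τ, |φ t x| ≤ |x| * Real.exp (L * t) := by
    intro x hx hxs
    set y : ℝ → ℝ := fun t => φ t x with hy
    have hyc : ContinuousOn y (Set.Icc 0 τ) := fun t ht =>
      (hφ x hx t ht).continuousWithinAt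
    have hy0 : |y 0| = |x| := by rw [hy]; simp [hφ0 x hx]
    have gron : ∀ b ∈ Set.Icc (0:ℝ) τ, (∀ s ∈ Set.Ico (0:ℝ) b, |y s| ≤ δ₀) →
        ∀ t ∈ Set.Icc (0:ℝ) b, |y t| ≤ |x| * Real.exp (L * t) := by
      intro b hb hbnd t ht
      have := norm_le_gronwallBound_of_norm_deriv_right_le
        (f := y) (f' := fun s => f (y s)) (δ := |x|) (K := L) (ε := 0) (a := 0) (b := b)
        (hyc.mono (Set.Icc_subset_Icc_right hb.2))
        (fun s hs => (hφ x hx s ⟨hs.1, hs.2.le.trans hb.2⟩).mono_of_mem_nhdsWithin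
          (Icc_mem_nhdsGE_of_mem ⟨hs.1, lt_of_lt_of_le hs.2 hb.2⟩))
        (by rw [Real.norm_eq_abs, hy0])
        (fun s hs => by
          rw [Real.norm_eq_abs, Real.norm_eq_abs, add_zero]
          exact hfb _ (hbnd s hs))
        t ht
      rwa [Real.norm_eq_abs, sub_zero, gronwallBound_ε0] at this
    have snone : ∀ t ∈ Set.Icc (0:ℝ) τ, |y t| ≤ δ₀ := by
      by_contra h
      push_neg at h
      obtain ⟨t₁, ht₁, ht₁'⟩ := h
      set S : Set ℝ := Set.Icc (0:ℝ) τ ∩ (fun t => |y t|) ⁻¹' Set.Ici δ₀ with hS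
      have hSc : IsClosed S :=
        ContinuousOn.preimage_isClosed_of_isClosed hyc.abs isClosed_Icc isClosed_Ici
      have hSne : S.Nonempty := ⟨t₁, ht₁, ht₁'.le⟩
      have hSbdd : BddBelow S := ⟨0, fun s hs => hs.1.1⟩
      have hmem := hSc.csInf_mem hSne hSbdd
      set t₀ := sInf S with ht₀def
      have ht₀ : t₀ ∈ Set.Icc (0:ℝ) τ := hmem.1
      have hlt : ∀ s ∈ Set.Ico (0:ℝ) t₀, |y s| ≤ δ₀ := by
        intro s hs
        by_contra hc
        push_neg at hc
        exact absurd (csInf_le hSbdd ⟨⟨hs.1, hs.2.le.trans ht₀.2⟩, hc.le⟩)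
          (not_le.mpr hs.2)
      have h1 := gron t₀ ht₀ hlt t₀ ⟨ht₀.1, le_rfl⟩
      have h2 : |y t₀| < δ₀ := by
        refine lt_of_le_of_lt (h1.trans ?_) hxs
        have : Real.exp (L * t₀) ≤ Real.exp (L * τ) :=
          Real.exp_le_exp.mpr (mul_le_mul_of_nonneg_left ht₀.2 hL0.le)
        exact mul_le_mul_of_nonneg_left this (abs_nonneg x)
      exact absurd hmem.2 (not_le.mpr h2)
    exact gron τ ⟨hτ.le, le_rfl⟩ (fun s hs => snone s ⟨hs.1, hs.2.le⟩)
  have h0U : (0:ℝ) ∈ U := mem_of_mem_nhds hU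
  have hφτ0 : φ τ 0 = 0 := by
    have := key 0 h0U (by simpa using hδ₀pos) τ ⟨hτ.le, le_rfl⟩
    simp only [abs_zero, zero_mul] at this
    exact abs_eq_zero.mp (le_antisymm this (abs_nonneg _))
  rw [hasDerivAt_iff_isLittleO]
  simp only [hφτ0, sub_zero, smul_eq_mul]
  rw [Asymptotics.isLittleO_iff]
  intro c hc
  set C : ℝ := τ * Real.exp ((L + |lam|) * τ) * Real.exp (lam * τ) with hCdef
  have hC0 : (0:ℝ) < C := by positivity
  obtain ⟨δ₁, hδ₁0, hδ₁⟩ := hr (c / C) (by positivity)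
  set ρ : ℝ := min δ₀ δ₁ / Real.exp (L * τ) with hρdef
  have hρ0 : (0:ℝ) < ρ := by
    apply div_pos (lt_min hδ₀pos hδ₁0) (Real.exp_pos _)
  filter_upwards [hU, Metric.ball_mem_nhds (0:ℝ) hρ0] with x hxU hxb
  have hxρ : |x| < ρ := by simpa [Real.dist_eq] using hxb
  have hxe : |x| * Real.exp (L * τ) < min δ₀ δ₁ :=
    (lt_div_iff₀ (Real.exp_pos _)).mp hxρ
  have hb1 : |x| * Real.exp (L * τ) < δ₀ := hxe.trans_le (min_le_left _ _)
  have hb2 : |x| * Real.exp (L * τ) ≤ δ₁ := (hxe.trans_le (min_le_right _ _)).le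
  have bt := key x hxU hb1
  have ybnd : ∀ t ∈ Set.Icc (0:ℝ) τ, |φ t x| ≤ |x| * Real.exp (L * τ) := by
    intro t ht
    refine (bt t ht).trans ?_
    exact mul_le_mul_of_nonneg_left
      (Real.exp_le_exp.mpr (mul_le_mul_of_nonneg_left ht.2 hL0.le)) (abs_nonneg x)
  set g : ℝ → ℝ := fun t => φ t x * Real.exp (-(lam * t)) with hgdef
  have hg : ∀ t ∈ Set.Icc (0:ℝ) τ, HasDerivWithinAt g
      ((f (φ t x) - lam * φ t x) * Real.exp (-(lam * t))) (Set.Icc (0:ℝ) τ) t := by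
    intro t ht
    have h1 := hφ x hxU t ht
    have h2 : HasDerivAt (fun s => Real.exp (-(lam * s))) (Real.exp (-(lam * t)) * (-lam)) t := by
      have h3 : HasDerivAt (fun s => -(lam * s)) (-lam) t := by
        exact (((hasDerivAt_id t).const_mul lam).neg).congr_deriv (by ring)
      simpa using h3.exp
    have := h1.mul h2.hasDerivWithinAt
    exact this.congr_deriv (by ring)
  set M : ℝ := c / C * (|x| * Real.exp ((L + |lam|) * τ)) with hMdef
  have hgb : ∀ t ∈ Set.Icc (0:ℝ) τ,
      ‖(f (φ t x) - lam * φ t x) * Real.exp (-(lam * t))‖ ≤ M := by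
    intro t ht
    have hyd : |φ t x| ≤ δ₁ := (ybnd t ht).trans hb2
    have h1 : |f (φ t x) - lam * φ t x| ≤ c / C * (|x| * Real.exp (L * τ)) := by
      refine (hδ₁ _ hyd).trans ?_
      exact mul_le_mul_of_nonneg_left (ybnd t ht) (by positivity)
    have h2 : Real.exp (-(lam * t)) ≤ Real.exp (|lam| * τ) := by
      apply Real.exp_le_exp.mpr
      have h3 : -(lam * t) ≤ |lam| * |t| := by rw [← abs_mul]; exact neg_le_abs _
      refine h3.trans (mul_le_mul_of_nonneg_left ?_ (abs_nonneg lam))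
      rw [abs_of_nonneg ht.1]; exact ht.2
    rw [Real.norm_eq_abs, abs_mul, Real.abs_exp]
    calc |f (φ t x) - lam * φ t x| * Real.exp (-(lam * t))
        ≤ (c / C * (|x| * Real.exp (L * τ))) * Real.exp (|lam| * τ) := by
          apply mul_le_mul h1 h2 (Real.exp_nonneg _) (by positivity)
      _ = M := by
          rw [hMdef, show (L + |lam|) * τ = L * τ + |lam| * τ from by ring, Real.exp_add]
          ring
  have mvt := Convex.norm_image_sub_le_of_norm_hasDerivWithin_le hg hgb (convex_Icc 0 τ)
    (Set.left_mem_Icc.mpr hτ.le) (Set.right_mem_Icc.mpr hτ.le)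
  have hg0 : g 0 = x := by
    rw [hgdef]; simp [hφ0 x hxU]
  rw [hg0, Real.norm_eq_abs, Real.norm_eq_abs, sub_zero, abs_of_pos hτ] at mvt
  -- mvt : |g τ - x| ≤ M * τ
  have hfar : φ τ x - x * Real.exp (lam * τ) = (g τ - x) * Real.exp (lam * τ) := by
    rw [hgdef]
    simp only
    rw [sub_mul, mul_assoc, ← Real.exp_add]
    simp
  rw [Real.norm_eq_abs, Real.norm_eq_abs, hfar, abs_mul, Real.abs_exp]
  calc |g τ - x| * Real.exp (lam * τ) ≤ M * τ * Real.exp (lam * τ) :=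
        mul_le_mul_of_nonneg_right mvt (Real.exp_nonneg _)
    _ = c / C * C * |x| := by rw [hMdef, hCdef]; ring
    _ = c * |x| := by rw [div_mul_cancel₀ c hC0.ne']
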